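/- (Wasserstein stability bound) Let T be a fixed target dataset. Assume: (A1) for every dataset D, the empirical risk L_D(θ) is μ-strongly convex in θ; (A2) z ↦ ∇_θℓ(θ;z) is G-Lipschitz; (A3) L_T is K-Lipschitz in θ. Then for any two datasets D, D' with ERMs θ_D, θ_{D'}, we have |L_T(θ_D) − L_T(θ_{D'})| ≤ (K·G/μ) · W₁(P̂_D, P̂_{D'}). -/

import Mathlib

open MeasureTheory
open scoped ENNReal RealInnerProductSpace BigOperators

noncomputable def W1 {X : Type*} [MeasurableSpace X] [PseudoMetricSpace X]
    (μ ν : Measure X) : ℝ :=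
  (⨅ π ∈ {π : Measure (X × X) | π.map Prod.fst = μ ∧ π.map Prod.snd = ν},
    ∫⁻ p, ENNReal.ofReal (dist p.1 p.2) ∂π).toReal

noncomputable def empFinset {X : Type*} [MeasurableSpace X] (D : Finset X) : Measure X :=
  (D.card : ℝ≥0∞)⁻¹ • ∑ z ∈ D, Measure.dirac z

noncomputable def empTuple {X : Type*} [MeasurableSpace X] {B : ℕ} (s : Fin B → X) : Measure X :=
  (B : ℝ≥0∞)⁻¹ • ∑ i, Measure.dirac (s i)


section aux
variable {X : Type*} [MeasurableSpace X] [MeasurableSingletonClass X]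

lemma emp_lintegral (D : Finset X) (h : X → ℝ≥0∞) :
    ∫⁻ z, h z ∂(empFinset D) = (D.card : ℝ≥0∞)⁻¹ * ∑ z ∈ D, h z := by
  rw [empFinset, lintegral_smul_measure, lintegral_finset_sum_measure]
  simp [lintegral_dirac]

lemma emp_lintegral_lt_top (D : Finset X) (h : X → ℝ≥0∞) (hh : ∀ z, h z ≠ ⊤) :
    ∫⁻ z, h z ∂(empFinset D) < ⊤ := by
  rw [emp_lintegral]
  rcases D.eq_empty_or_nonempty with rfl | hne
  · simp
  · exact ENNReal.mul_lt_top
      (ENNReal.inv_lt_top.2 (by exact_mod_cast hne.card_pos))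
      (ENNReal.sum_lt_top.2 fun z _ => (hh z).lt_top)

lemma emp_prob (D : Finset X) (hD : D.Nonempty) : IsProbabilityMeasure (empFinset D) := by
  constructor
  rw [empFinset]
  simp only [Measure.smul_apply, Measure.coe_finset_sum, Finset.sum_apply,
    Measure.dirac_apply_of_mem (Set.mem_univ _), smul_eq_mul]
  rw [Finset.sum_const, nsmul_eq_mul, mul_one]
  exact ENNReal.inv_mul_cancel (by exact_mod_cast hD.card_pos.ne') (by simp)

lemma emp_integral {E : Type*} [NormedAddCommGroup E] [NormedSpace ℝ E]
    [MeasurableSpace E] [BorelSpace E] [CompleteSpace E] (D : Finset X) (f : X → E)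
    (hf : StronglyMeasurable f) :
    ∫ z, f z ∂(empFinset D) = (D.card : ℝ)⁻¹ • ∑ z ∈ D, f z := by
  have hint : ∀ z : X, Integrable f (Measure.dirac z) := fun z =>
    ⟨hf.aestronglyMeasurable, by simp [HasFiniteIntegral, lintegral_dirac]⟩
  rw [empFinset, integral_smul_measure, integral_finset_sum_measure (fun z _ => hint z)]
  simp only [ENNReal.toReal_inv, ENNReal.toReal_natCast]
  congr 1
  exact Finset.sum_congr rfl fun z _ => integral_dirac f z
end aux

lemma w1_bound {d q : ℕ} (G : ℝ) (hG : 0 ≤ G)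
    (f : EuclideanSpace ℝ (Fin d) → EuclideanSpace ℝ (Fin q))
    (hf : ∀ z z', ‖f z - f z'‖ ≤ G * ‖z - z'‖)
    (D D' : Finset (EuclideanSpace ℝ (Fin d))) (hD : D.Nonempty) (hD' : D'.Nonempty) :
    ‖∫ z, f z ∂(empFinset D') - ∫ z, f z ∂(empFinset D)‖
      ≤ G * W1 (empFinset D) (empFinset D') := by
  classical
  let X := EuclideanSpace ℝ (Fin d)
  set μ : Measure X := empFinset D with hμdef
  set ν : Measure X := empFinset D' with hνdef
  haveI : IsProbabilityMeasure μ := emp_prob D hD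
  haveI : IsProbabilityMeasure ν := emp_prob D' hD'
  have hfL : LipschitzWith (Real.toNNReal G) f :=
    LipschitzWith.of_dist_le_mul fun z z' => by
      simpa [dist_eq_norm, Real.coe_toNNReal G hG] using hf z z'
  have hfc : Continuous f := hfL.continuous
  rcases eq_or_lt_of_le hG with hG0 | hGpos
  · -- G = 0 : f is constant
    obtain ⟨z₀, hz₀⟩ := hD
    have hconst : f = fun _ => f z₀ := funext fun z => by
      have := hf z z₀
      rw [← hG0, zero_mul] at this
      have : ‖f z - f z₀‖ = 0 := le_antisymm this (norm_nonneg _)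
      rwa [norm_eq_zero, sub_eq_zero] at this
    rw [hconst, integral_const, integral_const, probReal_univ, probReal_univ, ← hG0]
    simp
  -- main case G > 0
  set S := ⨅ π ∈ {π : Measure (X × X) | π.map Prod.fst = μ ∧ π.map Prod.snd = ν},
    ∫⁻ p, ENNReal.ofReal (dist p.1 p.2) ∂π with hSdef
  have hdist_meas : Measurable fun p : X × X => ENNReal.ofReal (dist p.1 p.2) :=
    (ENNReal.measurable_ofReal.comp
      ((continuous_fst.dist continuous_snd).measurable))
  -- finiteness of S via the product coupling
  obtain ⟨z₀, hz₀⟩ := hD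
  have hfin : S ≠ ⊤ := by
    have hmem : μ.prod ν ∈ {π : Measure (X × X) | π.map Prod.fst = μ ∧ π.map Prod.snd = ν} := by
      constructor
      · rw [Measure.map_fst_prod, measure_univ, one_smul]
      · rw [Measure.map_snd_prod, measure_univ, one_smul]
    have hle : S ≤ ∫⁻ p, ENNReal.ofReal (dist p.1 p.2) ∂(μ.prod ν) := biInf_le _ hmem
    have hbound : ∫⁻ p, ENNReal.ofReal (dist p.1 p.2) ∂(μ.prod ν)
        ≤ ∫⁻ p : X × X, (ENNReal.ofReal (dist p.1 z₀) + ENNReal.ofReal (dist z₀ p.2)) ∂(μ.prod ν) := by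
      apply lintegral_mono
      intro p
      dsimp only
      rw [← ENNReal.ofReal_add dist_nonneg dist_nonneg]
      exact ENNReal.ofReal_le_ofReal (dist_triangle _ _ _)
    have h1m : Measurable fun p : X × X => ENNReal.ofReal (dist p.1 z₀) :=
      ENNReal.measurable_ofReal.comp (continuous_fst.dist continuous_const).measurable
    have h2m : Measurable fun p : X × X => ENNReal.ofReal (dist z₀ p.2) :=
      ENNReal.measurable_ofReal.comp (continuous_const.dist continuous_snd).measurable
    rw [lintegral_add_left h1m] at hbound
    have e1 : ∫⁻ p : X × X, ENNReal.ofReal (dist p.1 z₀) ∂(μ.prod ν)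
        = ∫⁻ z, ENNReal.ofReal (dist z z₀) ∂μ := by
      conv_rhs => rw [← (hmem.1 : (μ.prod ν).map Prod.fst = μ)]
      rw [lintegral_map (f := fun z => ENNReal.ofReal (dist z z₀)) (by fun_prop) measurable_fst]
    have e2 : ∫⁻ p : X × X, ENNReal.ofReal (dist z₀ p.2) ∂(μ.prod ν)
        = ∫⁻ z, ENNReal.ofReal (dist z₀ z) ∂ν := by
      conv_rhs => rw [← (hmem.2 : (μ.prod ν).map Prod.snd = ν)]
      rw [lintegral_map (f := fun z => ENNReal.ofReal (dist z₀ z)) (by fun_prop) measurable_snd]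
    rw [e1, e2] at hbound
    have f1 : ∫⁻ z, ENNReal.ofReal (dist z z₀) ∂μ < ⊤ :=
      emp_lintegral_lt_top D _ (fun z => ENNReal.ofReal_ne_top)
    have f2 : ∫⁻ z, ENNReal.ofReal (dist z₀ z) ∂ν < ⊤ :=
      emp_lintegral_lt_top D' _ (fun z => ENNReal.ofReal_ne_top)
    exact (hle.trans_lt (hbound.trans_lt (ENNReal.add_lt_top.2 ⟨f1, f2⟩))).ne
  -- per-coupling bound
  have hGne0 : ENNReal.ofReal G ≠ 0 := (ENNReal.ofReal_pos.2 hGpos).ne'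
  have key : ∀ π : Measure (X × X),
      π ∈ {π : Measure (X × X) | π.map Prod.fst = μ ∧ π.map Prod.snd = ν} →
      ENNReal.ofReal ‖∫ z, f z ∂ν - ∫ z, f z ∂μ‖
        ≤ ENNReal.ofReal G * ∫⁻ p, ENNReal.ofReal (dist p.1 p.2) ∂π := by
    rintro π ⟨hπ1, hπ2⟩
    by_cases hI : ∫⁻ p, ENNReal.ofReal (dist p.1 p.2) ∂π = ⊤
    · rw [hI, ENNReal.mul_top hGne0]
      exact le_top
    haveI : IsProbabilityMeasure π := by
      constructor
      have h := congrArg (fun m : Measure X => m Set.univ) hπ1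
      simpa [Measure.map_apply measurable_fst MeasurableSet.univ] using h
    have hfm : Measurable fun z : X => (‖f z‖₊ : ℝ≥0∞) :=
      hfc.measurable.nnnorm.coe_nnreal_ennreal
    have hi1 : Integrable (fun p : X × X => f p.1) π := by
      refine ⟨(hfc.comp continuous_fst).aestronglyMeasurable, ?_⟩
      have h : ∫⁻ p : X × X, (‖f p.1‖₊ : ℝ≥0∞) ∂π = ∫⁻ z, (‖f z‖₊ : ℝ≥0∞) ∂μ := by
        conv_rhs => rw [← hπ1]
        rw [lintegral_map (f := fun z => (‖f z‖₊ : ℝ≥0∞)) hfm measurable_fst]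
      rw [HasFiniteIntegral]
      simp only [enorm_eq_nnnorm]
      rw [h]
      exact emp_lintegral_lt_top D _ (fun z => ENNReal.coe_ne_top)
    have hi2 : Integrable (fun p : X × X => f p.2) π := by
      refine ⟨(hfc.comp continuous_snd).aestronglyMeasurable, ?_⟩
      have h : ∫⁻ p : X × X, (‖f p.2‖₊ : ℝ≥0∞) ∂π = ∫⁻ z, (‖f z‖₊ : ℝ≥0∞) ∂ν := by
        conv_rhs => rw [← hπ2]
        rw [lintegral_map (f := fun z => (‖f z‖₊ : ℝ≥0∞)) hfm measurable_snd]
      rw [HasFiniteIntegral]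
      simp only [enorm_eq_nnnorm]
      rw [h]
      exact emp_lintegral_lt_top D' _ (fun z => ENNReal.coe_ne_top)
    have hid : Integrable (fun p : X × X => dist p.1 p.2) π := by
      refine ⟨(continuous_fst.dist continuous_snd).aestronglyMeasurable, ?_⟩
      rw [HasFiniteIntegral]
      have h : ∀ p : X × X, (‖dist p.1 p.2‖₊ : ℝ≥0∞) = ENNReal.ofReal (dist p.1 p.2) :=
        fun p => Real.enorm_eq_ofReal dist_nonneg
      simp_rw [enorm_eq_nnnorm, h]
      exact lt_top_iff_ne_top.2 hI
    have hm1 : ∫ z, f z ∂μ = ∫ p : X × X, f p.1 ∂π := by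
      conv_lhs => rw [← hπ1]
      exact integral_map measurable_fst.aemeasurable hfc.aestronglyMeasurable
    have hm2 : ∫ z, f z ∂ν = ∫ p : X × X, f p.2 ∂π := by
      conv_lhs => rw [← hπ2]
      exact integral_map measurable_snd.aemeasurable hfc.aestronglyMeasurable
    have hsub : ∫ z, f z ∂ν - ∫ z, f z ∂μ = ∫ p : X × X, (f p.2 - f p.1) ∂π := by
      rw [hm1, hm2, integral_sub hi2 hi1]
    calc ENNReal.ofReal ‖∫ z, f z ∂ν - ∫ z, f z ∂μ‖
        = ENNReal.ofReal ‖∫ p : X × X, (f p.2 - f p.1) ∂π‖ := by rw [hsub]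
      _ ≤ ENNReal.ofReal (∫ p : X × X, G * dist p.1 p.2 ∂π) := by
          apply ENNReal.ofReal_le_ofReal
          refine (norm_integral_le_integral_norm _).trans ?_
          refine integral_mono_of_nonneg (Filter.Eventually.of_forall fun p => norm_nonneg _)
            (hid.const_mul G) (Filter.Eventually.of_forall fun p => ?_)
          dsimp only
          calc ‖f p.2 - f p.1‖ ≤ G * ‖p.2 - p.1‖ := hf _ _
            _ = G * dist p.1 p.2 := by rw [← dist_eq_norm, dist_comm]
      _ = ENNReal.ofReal G * ∫⁻ p, ENNReal.ofReal (dist p.1 p.2) ∂π := by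
          rw [integral_const_mul, ENNReal.ofReal_mul hG,
            ofReal_integral_eq_lintegral_ofReal hid
              (Filter.Eventually.of_forall fun p => dist_nonneg)]
  have hkey : ENNReal.ofReal ‖∫ z, f z ∂ν - ∫ z, f z ∂μ‖ / ENNReal.ofReal G ≤ S := by
    refine le_iInf₂ fun π hπ => ?_
    rw [ENNReal.div_le_iff_le_mul (Or.inl hGne0) (Or.inl ENNReal.ofReal_ne_top), mul_comm]
    exact key π hπ
  have hv : ENNReal.ofReal ‖∫ z, f z ∂ν - ∫ z, f z ∂μ‖ ≤ ENNReal.ofReal G * S := by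
    have h := (ENNReal.div_le_iff_le_mul (Or.inl hGne0) (Or.inl ENNReal.ofReal_ne_top)).1 hkey
    rwa [mul_comm] at h
  have hfinal := ENNReal.toReal_mono (ENNReal.mul_ne_top ENNReal.ofReal_ne_top hfin) hv
  rw [ENNReal.toReal_ofReal (norm_nonneg _), ENNReal.toReal_mul,
    ENNReal.toReal_ofReal hG] at hfinal
  simpa [W1, hSdef] using hfinal


/-- Wasserstein stability bound: under strong convexity of empirical
risks, data-Lipschitz gradients, and Lipschitz target loss, the test losses of the
ERMs on two datasets differ by at most (K G / μ) W₁. -/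
theorem stmt3 {d p : ℕ}
    (ℓ : EuclideanSpace ℝ (Fin p) → EuclideanSpace ℝ (Fin d) → ℝ)
    (g : EuclideanSpace ℝ (Fin p) → EuclideanSpace ℝ (Fin d) → EuclideanSpace ℝ (Fin p))
    (LT : EuclideanSpace ℝ (Fin p) → ℝ)
    (μ G K : ℝ) (hμ : 0 < μ) (hG : 0 ≤ G) (hK : 0 ≤ K)
    -- g θ z is the gradient of ℓ(·; z) at θ, so the average of g is the gradient
    -- of the empirical risk
    (hgrad : ∀ (A : Finset (EuclideanSpace ℝ (Fin d))) (θ : EuclideanSpace ℝ (Fin p)),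
      HasGradientAt (fun θ => (A.card : ℝ)⁻¹ * ∑ z ∈ A, ℓ θ z)
        ((A.card : ℝ)⁻¹ • ∑ z ∈ A, g θ z) θ)
    -- (A1) every empirical risk is μ-strongly convex
    (hA1 : ∀ (A : Finset (EuclideanSpace ℝ (Fin d))), A.Nonempty →
      ∀ θ θ' : EuclideanSpace ℝ (Fin p),
      (A.card : ℝ)⁻¹ * ∑ z ∈ A, ℓ θ z
          + ⟪(A.card : ℝ)⁻¹ • ∑ z ∈ A, g θ z, θ' - θ⟫ + μ / 2 * ‖θ' - θ‖ ^ 2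
        ≤ (A.card : ℝ)⁻¹ * ∑ z ∈ A, ℓ θ' z)
    -- (A2) the gradient is G-Lipschitz with respect to the data point
    (hA2 : ∀ θ z z', ‖g θ z - g θ z'‖ ≤ G * ‖z - z'‖)
    -- (A3) the target loss is K-Lipschitz in the parameters
    (hA3 : ∀ θ θ', |LT θ - LT θ'| ≤ K * ‖θ - θ'‖)
    (D D' : Finset (EuclideanSpace ℝ (Fin d))) (hD : D.Nonempty) (hD' : D'.Nonempty)
    (θD θD' : EuclideanSpace ℝ (Fin p))
    (hERM : ∀ θ, (D.card : ℝ)⁻¹ * ∑ z ∈ D, ℓ θD z ≤ (D.card : ℝ)⁻¹ * ∑ z ∈ D, ℓ θ z)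
    (hERM' : ∀ θ, (D'.card : ℝ)⁻¹ * ∑ z ∈ D', ℓ θD' z
      ≤ (D'.card : ℝ)⁻¹ * ∑ z ∈ D', ℓ θ z) :
    |LT θD - LT θD'| ≤ K * G / μ * W1 (empFinset D) (empFinset D') := by
  classical
  have grad_zero : ∀ (A : Finset (EuclideanSpace ℝ (Fin d))) (θ₀ : EuclideanSpace ℝ (Fin p)),
      (∀ θ, (A.card : ℝ)⁻¹ * ∑ z ∈ A, ℓ θ₀ z ≤ (A.card : ℝ)⁻¹ * ∑ z ∈ A, ℓ θ z) →
      (A.card : ℝ)⁻¹ • ∑ z ∈ A, g θ₀ z = 0 := by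
    intro A θ₀ hmin
    have hloc : IsLocalMin (fun θ => (A.card : ℝ)⁻¹ * ∑ z ∈ A, ℓ θ z) θ₀ :=
      Filter.Eventually.of_forall hmin
    have h := hloc.hasFDerivAt_eq_zero (hasGradientAt_iff_hasFDerivAt.1 (hgrad A θ₀))
    have h2 := congrArg (InnerProductSpace.toDual ℝ (EuclideanSpace ℝ (Fin p))).symm h
    simpa using h2
  have hu : (D.card : ℝ)⁻¹ • ∑ z ∈ D, g θD z = 0 := grad_zero D θD hERM
  have hu' : (D'.card : ℝ)⁻¹ • ∑ z ∈ D', g θD' z = 0 := grad_zero D' θD' hERM'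
  set v : EuclideanSpace ℝ (Fin p) := (D'.card : ℝ)⁻¹ • ∑ z ∈ D', g θD z with hvdef
  set r : ℝ := ‖θD - θD'‖ with hrdef
  have hWnn : 0 ≤ W1 (empFinset D) (empFinset D') := ENNReal.toReal_nonneg
  by_cases hr : θD = θD'
  · rw [hr, sub_self, abs_zero]
    exact mul_nonneg (by positivity) hWnn
  have hrpos : 0 < r := norm_pos_iff.mpr (sub_ne_zero_of_ne hr)
  -- strong convexity gives μ r ≤ ‖v‖
  have h1 := hA1 D' hD' θD' θD
  rw [hu'] at h1
  simp only [inner_zero_left] at h1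
  have h2 := hA1 D' hD' θD θD'
  have hnorm : ‖θD' - θD‖ = r := norm_sub_rev _ _
  rw [hnorm] at h2
  have hip : ⟪v, θD - θD'⟫ ≤ ‖v‖ * r := real_inner_le_norm _ _
  have hip2 : ⟪v, θD' - θD⟫ = -⟪v, θD - θD'⟫ := by rw [← inner_neg_right, neg_sub]
  have hiv : μ * r ^ 2 ≤ ‖v‖ * r := by nlinarith [h1, h2, hip, hip2]
  have hμr : μ * r ≤ ‖v‖ := by nlinarith [hiv, hrpos]
  -- v is the difference of the two mean gradients
  have hgc : Continuous (g θD) := by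
    have hL : LipschitzWith (Real.toNNReal G) (g θD) :=
      LipschitzWith.of_dist_le_mul fun z z' => by
        simpa [dist_eq_norm, Real.coe_toNNReal G hG] using hA2 θD z z'
    exact hL.continuous
  have hmean : v = (∫ z, g θD z ∂(empFinset D')) - ∫ z, g θD z ∂(empFinset D) := by
    rw [emp_integral D' _ hgc.stronglyMeasurable, emp_integral D _ hgc.stronglyMeasurable,
      hu, sub_zero]
  have hvle : ‖v‖ ≤ G * W1 (empFinset D) (empFinset D') := by
    rw [hmean]
    exact w1_bound G hG (g θD) (fun z z' => hA2 θD z z') D D' hD hD'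
  calc |LT θD - LT θD'| ≤ K * r := hA3 θD θD'
    _ ≤ K * (G * W1 (empFinset D) (empFinset D') / μ) := by
        apply mul_le_mul_of_nonneg_left _ hK
        rw [le_div_iff₀ hμ]
        calc r * μ = μ * r := mul_comm _ _
          _ ≤ ‖v‖ := hμr
          _ ≤ G * W1 (empFinset D) (empFinset D') := hvle
    _ = K * G / μ * W1 (empFinset D) (empFinset D') := by ring
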